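/- Let T be a rooted tree with vertex set V and M ⊆ V a set of more than ℓ nodes (ℓ ≥ 1). Then there exists a subtree U of T with topmost node u such that the induced subgraph of T on (V(T) \ V(U)) ∪ {u} is connected and ℓ/2 ≤ |M ∩ (V(U) \ {u})| ≤ ℓ. -/

import Mathlib

open Classical in
/-- Descendants of `v` under the parent map (including `v`). -/
noncomputable def descSet {V : Type*} [Fintype V] (parent : V → V) (v : V) : Finset V :=
  Finset.univ.filter (fun x => ∃ n : ℕ, parent^[n] x = v)

lemma mem_descSet {V : Type*} [Fintype V] {parent : V → V} {v x : V} :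
    x ∈ descSet parent v ↔ ∃ n : ℕ, parent^[n] x = v := by
  simp [descSet]

/-- Children of `v` (excluding `v` itself, to handle the root fixed point). -/
noncomputable def childSet {V : Type*} [Fintype V] [DecidableEq V] (parent : V → V) (v : V) :
    Finset V :=
  Finset.univ.filter (fun c => parent c = v ∧ c ≠ v)

lemma mem_childSet {V : Type*} [Fintype V] [DecidableEq V] {parent : V → V} {v c : V} :
    c ∈ childSet parent v ↔ parent c = v ∧ c ≠ v := by
  simp [childSet]

section tree
variable {V : Type*} [Fintype V] [DecidableEq V] {parent : V → V} {root : V}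
  (hroot : parent root = root) (hreach : ∀ v, ∃ n : ℕ, parent^[n] v = root)

include hroot hreach in
lemma acyc {x : V} {n : ℕ} (hn : 1 ≤ n) (hx : parent^[n] x = x) : x = root := by
  obtain ⟨m, hm⟩ := hreach x
  have hcycle : ∀ k : ℕ, parent^[n * k] x = x := by
    intro k
    induction k with
    | zero => simp
    | succ k ih =>
      have : n * (k + 1) = n + n * k := by ring
      rw [this, Function.iterate_add_apply, ih, hx]
  have hge : m ≤ n * m := Nat.le_mul_of_pos_left m hn
  have : parent^[n * m] x = root := by
    have h1 : parent^[n * m] x = parent^[n * m - m] (parent^[m] x) := by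
      rw [← Function.iterate_add_apply]
      congr 1
      omega
    rw [h1, hm, Function.iterate_fixed hroot]
  rw [hcycle m] at this
  exact this

lemma self_mem_descSet (v : V) : v ∈ descSet parent v :=
  mem_descSet.2 ⟨0, rfl⟩

lemma parent_mem_descSet {v x : V} (hx : x ∈ descSet parent v) (hne : x ≠ v) :
    parent x ∈ descSet parent v := by
  obtain ⟨n, hn⟩ := mem_descSet.1 hx
  cases n with
  | zero => exact absurd hn hne
  | succ k =>
    refine mem_descSet.2 ⟨k, ?_⟩
    rw [← hn, ← Function.iterate_succ_apply]

lemma mem_descSet_of_parent {v y : V} (hy : parent y ∈ descSet parent v) :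
    y ∈ descSet parent v := by
  obtain ⟨n, hn⟩ := mem_descSet.1 hy
  exact mem_descSet.2 ⟨n + 1, by rw [Function.iterate_succ_apply]; exact hn⟩

include hroot hreach in
lemma root_not_mem_child_desc {v c : V} (hc : c ∈ childSet parent v) :
    v ∉ descSet parent c := by
  obtain ⟨hcp, hcne⟩ := mem_childSet.1 hc
  intro hv
  obtain ⟨a, ha⟩ := mem_descSet.1 hv
  have : parent^[a + 1] v = v := by
    rw [Function.iterate_succ_apply', ha, hcp]
  have hv' : v = root := acyc hroot hreach (by omega) this
  apply hcne
  rw [← ha, hv', Function.iterate_fixed hroot]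

include hroot hreach in
lemma disjoint_child_desc {v c₁ c₂ : V} (h₁ : c₁ ∈ childSet parent v)
    (h₂ : c₂ ∈ childSet parent v) (hne : c₁ ≠ c₂) :
    Disjoint (descSet parent c₁) (descSet parent c₂) := by
  obtain ⟨hp₁, hne₁⟩ := mem_childSet.1 h₁
  obtain ⟨hp₂, hne₂⟩ := mem_childSet.1 h₂
  rw [Finset.disjoint_left]
  intro x hx₁ hx₂
  obtain ⟨a, ha⟩ := mem_descSet.1 hx₁
  obtain ⟨b, hb⟩ := mem_descSet.1 hx₂
  -- WLOG via a general claim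
  have key : ∀ (c₁ c₂ : V), parent c₁ = v → c₁ ≠ v → parent c₂ = v → c₂ ≠ v →
      ∀ a b : ℕ, a ≤ b → parent^[a] x = c₁ → parent^[b] x = c₂ → c₁ = c₂ := by
    intro c₁ c₂ hp₁ hne₁ hp₂ hne₂ a b hab ha hb
    have hc₂ : parent^[b - a] c₁ = c₂ := by
      rw [← ha, ← Function.iterate_add_apply]
      rw [show b - a + a = b by omega, hb]
    rcases Nat.eq_or_lt_of_le hab with heq | hlt
    · rw [← hc₂, heq, Nat.sub_self]; rfl
    · exfalso
      have hcyc : parent^[b - a] v = v := by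
        have h1 : parent^[b - a] v = parent^[b - a - 1] (parent v) := by
          rw [← Function.iterate_succ_apply]
          congr 1
          omega
        calc parent^[b - a] v = parent^[b - a] (parent c₁) := by rw [hp₁]
          _ = parent^[b - a + 1] c₁ := by rw [Function.iterate_succ_apply]
          _ = parent (parent^[b - a] c₁) := by rw [Function.iterate_succ_apply']
          _ = parent c₂ := by rw [hc₂]
          _ = v := hp₂
      have hv : v = root := acyc hroot hreach (by omega) hcyc
      apply hne₂
      have : c₂ = parent^[b - a - 1] (parent c₁) := by
        rw [← hc₂, ← Function.iterate_succ_apply]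
        congr 1
        omega
      rw [this, hp₁, hv, Function.iterate_fixed hroot]
  rcases le_total a b with hab | hab
  · exact hne (key c₁ c₂ hp₁ hne₁ hp₂ hne₂ a b hab ha hb)
  · exact hne (key c₂ c₁ hp₂ hne₂ hp₁ hne₁ b a hab hb ha).symm

lemma descSet_decomp (v : V) :
    descSet parent v = insert v ((childSet parent v).biUnion (descSet parent)) := by
  ext x
  simp only [Finset.mem_insert, Finset.mem_biUnion]
  constructor
  · intro hx
    obtain ⟨n, hn⟩ := mem_descSet.1 hx
    clear hx
    induction n generalizing x with
    | zero => exact Or.inl hn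
    | succ k ih =>
      rw [Function.iterate_succ_apply] at hn
      rcases ih (parent x) hn with h | ⟨c, hc, hxc⟩
      · by_cases hxv : x = v
        · exact Or.inl hxv
        · exact Or.inr ⟨x, mem_childSet.2 ⟨h, hxv⟩, self_mem_descSet x⟩
      · exact Or.inr ⟨c, hc, mem_descSet_of_parent hxc⟩
  · rintro (rfl | ⟨c, hc, hxc⟩)
    · exact self_mem_descSet x
    · obtain ⟨a, ha⟩ := mem_descSet.1 hxc
      refine mem_descSet.2 ⟨a + 1, ?_⟩
      rw [Function.iterate_succ_apply', ha, (mem_childSet.1 hc).1]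

include hroot hreach in
lemma card_inter_union (M : Finset V) {v : V} {t : Finset V} (ht : t ⊆ childSet parent v) :
    (M ∩ t.biUnion (descSet parent)).card = ∑ c ∈ t, (M ∩ descSet parent c).card := by
  have h1 : M ∩ t.biUnion (descSet parent) = t.biUnion (fun c => M ∩ descSet parent c) := by
    ext x
    simp only [Finset.mem_inter, Finset.mem_biUnion]
    tauto
  rw [h1]
  apply Finset.card_biUnion
  intro c₁ h₁ c₂ h₂ hne
  exact Finset.disjoint_of_subset_left Finset.inter_subset_right
    (Finset.disjoint_of_subset_right Finset.inter_subset_right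
      (disjoint_child_desc hroot hreach (ht h₁) (ht h₂) hne))

include hroot hreach in
lemma card_desc_le (M : Finset V) (v : V) :
    (M ∩ descSet parent v).card ≤
      1 + ∑ c ∈ childSet parent v, (M ∩ descSet parent c).card := by
  rw [descSet_decomp (parent := parent) v]
  calc (M ∩ insert v ((childSet parent v).biUnion (descSet parent))).card
      ≤ (insert v (M ∩ (childSet parent v).biUnion (descSet parent))).card := by
        apply Finset.card_le_card
        intro x hx
        simp only [Finset.mem_inter, Finset.mem_insert] at hx ⊢
        tauto
    _ ≤ 1 + (M ∩ (childSet parent v).biUnion (descSet parent)).card :=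
        (Finset.card_insert_le _ _).trans (by omega)
    _ = 1 + ∑ c ∈ childSet parent v, (M ∩ descSet parent c).card := by
        rw [card_inter_union hroot hreach M (subset_rfl)]

end tree

/-- Greedy subset selection. -/
lemma exists_subset_half {α : Type*} [DecidableEq α] (f : α → ℕ) (ℓ : ℕ) (s : Finset α) :
    ℓ ≤ 2 * ∑ c ∈ s, f c → (∀ c ∈ s, f c ≤ ℓ) →
    ∃ t ⊆ s, ℓ ≤ 2 * ∑ c ∈ t, f c ∧ ∑ c ∈ t, f c ≤ ℓ := by
  induction s using Finset.induction_on with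
  | empty =>
    intro h _
    exact ⟨∅, subset_rfl, by simpa using h, by simp⟩
  | insert a s ha ih =>
    intro hsum hb
    by_cases h1 : ℓ ≤ 2 * f a
    · refine ⟨{a}, by simp, by simpa using h1, by simpa using hb a (Finset.mem_insert_self a s)⟩
    · by_cases h2 : ℓ ≤ 2 * ∑ c ∈ s, f c
      · obtain ⟨t, hts, h⟩ := ih h2 (fun c hc => hb c (Finset.mem_insert_of_mem hc))
        exact ⟨t, hts.trans (Finset.subset_insert a s), h⟩
      · refine ⟨insert a s, subset_rfl, hsum, ?_⟩
        rw [Finset.sum_insert ha] at hsum ⊢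
        omega

section main
variable {V : Type*} [Fintype V] [DecidableEq V] {parent : V → V} {root : V}

lemma descSet_subset_of_parent {c v : V} (h : parent c = v) :
    descSet parent c ⊆ descSet parent v := by
  intro x hx
  obtain ⟨a, ha⟩ := mem_descSet.1 hx
  exact mem_descSet.2 ⟨a + 1, by rw [Function.iterate_succ_apply', ha, h]⟩

lemma main_aux (hroot : parent root = root) (hreach : ∀ v, ∃ n : ℕ, parent^[n] v = root)
    (M : Finset V) (ℓ : ℕ) (hℓ : 1 ≤ ℓ) :
    ∀ N (v : V), (descSet parent v).card ≤ N →
      ℓ ≤ ∑ c ∈ childSet parent v, (M ∩ descSet parent c).card →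
      ∃ (U : Finset V) (u : V), u ∈ U ∧
        (∀ x ∈ U, x ≠ u → parent x ∈ U) ∧
        (∀ y : V, parent y ∈ U → parent y ≠ u → y ∈ U) ∧
        (∀ x : V, (x ∉ U ∨ x = u) → (parent x ∉ U ∨ parent x = u)) ∧
        ℓ ≤ 2 * (M ∩ U.erase u).card ∧ (M ∩ U.erase u).card ≤ ℓ := by
  intro N
  induction N with
  | zero =>
    intro v hv _
    have h0 : 0 < (descSet parent v).card := Finset.card_pos.2 ⟨v, self_mem_descSet v⟩
    omega
  | succ N ih =>
    intro v hv hsum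
    by_cases hbig : ∃ c ∈ childSet parent v, ℓ < (M ∩ descSet parent c).card
    · obtain ⟨c, hc, hcℓ⟩ := hbig
      have hcard : (descSet parent c).card ≤ N := by
        have hss : descSet parent c ⊂ descSet parent v := by
          refine Finset.ssubset_iff_of_subset
            (descSet_subset_of_parent (mem_childSet.1 hc).1) |>.2 ?_
          exact ⟨v, self_mem_descSet v, root_not_mem_child_desc hroot hreach hc⟩
        have := Finset.card_lt_card hss
        omega
      apply ih c hcard
      have := card_desc_le hroot hreach M c
      omega
    · push_neg at hbig
      obtain ⟨t, hts, h1, h2⟩ := exists_subset_half (fun c => (M ∩ descSet parent c).card) ℓ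
        (childSet parent v) (hsum.trans (Nat.le_mul_of_pos_left _ (by norm_num))) hbig
      set B := t.biUnion (descSet parent) with hB
      have hvB : v ∉ B := by
        simp only [hB, Finset.mem_biUnion, not_exists]
        rintro c ⟨hc, hvc⟩
        exact root_not_mem_child_desc hroot hreach (hts hc) hvc
      refine ⟨insert v B, v, Finset.mem_insert_self v B, ?_, ?_, ?_, ?_, ?_⟩
      · intro x hx hxv
        have hxB : x ∈ B := (Finset.mem_insert.1 hx).resolve_left hxv
        obtain ⟨c, hct, hxc⟩ := Finset.mem_biUnion.1 hxB
        by_cases hxc' : x = c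
        · subst hxc'
          rw [(mem_childSet.1 (hts hct)).1]
          exact Finset.mem_insert_self v B
        · exact Finset.mem_insert_of_mem
            (Finset.mem_biUnion.2 ⟨c, hct, parent_mem_descSet hxc hxc'⟩)
      · intro y hy hyv
        have hpB : parent y ∈ B := (Finset.mem_insert.1 hy).resolve_left hyv
        obtain ⟨c, hct, hpc⟩ := Finset.mem_biUnion.1 hpB
        exact Finset.mem_insert_of_mem
          (Finset.mem_biUnion.2 ⟨c, hct, mem_descSet_of_parent hpc⟩)
      · intro x hx
        by_contra hcon
        push_neg at hcon
        obtain ⟨hpU, hpv⟩ := hcon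
        have hpB : parent x ∈ B := (Finset.mem_insert.1 hpU).resolve_left hpv
        obtain ⟨c, hct, hpc⟩ := Finset.mem_biUnion.1 hpB
        have hxB : x ∈ B := Finset.mem_biUnion.2 ⟨c, hct, mem_descSet_of_parent hpc⟩
        have hxv : x = v := by
          rcases hx with h | h
          · exact absurd (Finset.mem_insert_of_mem hxB) h
          · exact h
        subst hxv
        obtain ⟨a, ha⟩ := mem_descSet.1 hpc
        have hcyc : parent^[a + 2] x = x := by
          have : parent^[a + 2] x = parent (parent^[a] (parent x)) := by
            rw [Function.iterate_succ_apply', Function.iterate_succ_apply]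
          rw [this, ha, (mem_childSet.1 (hts hct)).1]
        have hxr : x = root := acyc hroot hreach (by omega) hcyc
        exact hpv (by rw [hxr, hroot])
      · rw [Finset.erase_insert hvB, hB, card_inter_union hroot hreach M hts]
        exact h1
      · rw [Finset.erase_insert hvB, hB, card_inter_union hroot hreach M hts]
        exact h2

end main

theorem rooted_tree_balanced_subtree {V : Type*} [Fintype V] [DecidableEq V]
    (parent : V → V) (root : V)
    (hroot : parent root = root)
    (hreach : ∀ v, ∃ n : ℕ, parent^[n] v = root)
    (M : Finset V) (ℓ : ℕ) (hℓ : 1 ≤ ℓ) (hM : ℓ < M.card) :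
    ∃ (U : Finset V) (u : V), u ∈ U ∧
      (∀ x ∈ U, x ≠ u → parent x ∈ U) ∧
      (∀ y : V, parent y ∈ U → parent y ≠ u → y ∈ U) ∧
      (∀ x : V, (x ∉ U ∨ x = u) → (parent x ∉ U ∨ parent x = u)) ∧
      ℓ ≤ 2 * (M ∩ U.erase u).card ∧ (M ∩ U.erase u).card ≤ ℓ := by
  have hdesc : descSet parent root = Finset.univ := by
    ext x
    simpa [mem_descSet] using hreach x
  have hMroot : (M ∩ descSet parent root).card = M.card := by
    rw [hdesc, Finset.inter_univ]
  have hle := card_desc_le hroot hreach M root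
  exact main_aux hroot hreach M ℓ hℓ (descSet parent root).card root le_rfl (by omega)
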